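/- arXiv:1704.05947 — 2 statements merged into one kernel-verified Lean document; each statement's English description precedes it below -/
import Mathlib

section
/- Let G (with m modes, state constraint P x ≤ p, noise bounds ε_η, ε_ν) and Ḡ (with m̄ modes, state constraint P̄ x̄ ≤ p̄, noise bounds ε_η̄, ε_ν̄) be two discrete-time switched affine models with the same input dimension n_u and output dimension n_y, and let T be a positive integer. Suppose there exist sequences x_0,…,x_T ∈ ℝ^n, x̄_0,…,x̄_T ∈ ℝ^{n̄}, inputs u_t ∈ ℝ^{n_u} with ‖u_t‖_∞ ≤ U, noises η_t, η̄_t ∈ ℝ^{n_y} and ν_t ∈ ℝ^n, ν̄_t ∈ ℝ^{n̄}, binary variables a_{i,j,t} ∈ {0,1} with Σ_{i=1}^m Σ_{j=1}^{m̄} a_{i,j,t} = 1 for every t, slack vectors s_{i,t} ∈ ℝ^n, s̄_{j,t} ∈ ℝ^{n̄}, r_{i,j,t} ∈ ℝ^{n_y}, and a real δ, such that for all t ∈ {0,…,T−1}, all i ∈ {1,…,m}, and all j ∈ {1,…,m̄}: x_{t+1} = A_i x_t + B_i u_t + f_i + ν_t + s_{i,t}; x̄_{t+1} = Ā_j x̄_t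 + B̄_j u_t + f̄_j + ν̄_t + s̄_{j,t}; P x_t ≤ p; P̄ x̄_t ≤ p̄; C_i x_t + D_i u_t + g_i + η_t = C̄_j x̄_t + D̄_j u_t + ḡ_j + η̄_t + r_{i,j,t}; ‖η_t‖_∞ ≤ ε_η, ‖η̄_t‖_∞ ≤ ε_η̄, ‖ν_t‖_∞ ≤ ε_ν, ‖ν̄_t‖_∞ ≤ ε_ν̄; the SOS-1 conditions hold (for every component, at most one of a_{i,j,t} and s_{i,t}^k is nonzero, at most one of a_{i,j,t} and s̄_{j,t}^k is nonzero, and at most one of a_{i,j,t} and r_{i,j,t}^l is nonzero); and max(‖η_t − η̄_t‖_∞, ‖ν_t − ν̄_t‖_∞) ≤ δ. Then G and Ḡ are not T-distinguishable, i.e., B^T(G) ∩ B^T(Ḡ) ≠ ∅. -/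
open Matrix

/-- A discrete-time switched affine (SWA) model with `m` modes, state dimension `n`,
input dimension `nu`, output dimension `ny`, `q` state constraints `P x ≤ p`,
input bound `U`, measurement-noise bound `εη` and process-noise bound `εν`. -/
structure SWA (n nu ny q m : ℕ) where
  A : Fin m → Matrix (Fin n) (Fin n) ℝ
  B : Fin m → Matrix (Fin n) (Fin nu) ℝ
  C : Fin m → Matrix (Fin ny) (Fin n) ℝ
  D : Fin m → Matrix (Fin ny) (Fin nu) ℝ
  f : Fin m → Fin n → ℝ
  g : Fin m → Fin ny → ℝ
  P : Matrix (Fin q) (Fin n) ℝ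
  p : Fin q → ℝ
  U : ℝ
  εη : ℝ
  εν : ℝ

/-- The length-`N` behavior of an SWA model: the input-output sequence
`{(u_t, y_t)}_{t=0}^{N-1}` (given as `ℕ`-indexed functions, only the first `N`
values matter) is compatible with the model.  The norm `‖·‖` on `Fin k → ℝ`
is the sup-norm. -/
def InBehavior {n nu ny q m : ℕ} (G : SWA n nu ny q m) (N : ℕ)
    (u : ℕ → Fin nu → ℝ) (y : ℕ → Fin ny → ℝ) : Prop :=
  (∀ t < N, ‖u t‖ ≤ G.U) ∧
  ∃ (x : ℕ → Fin n → ℝ) (σ : ℕ → Fin m)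
    (η : ℕ → Fin ny → ℝ) (ν : ℕ → Fin n → ℝ),
    ∀ t < N,
      (∀ k, (G.P.mulVec (x t)) k ≤ G.p k) ∧
      ‖η t‖ ≤ G.εη ∧ ‖ν t‖ ≤ G.εν ∧
      x (t + 1) = (G.A (σ t)).mulVec (x t) + (G.B (σ t)).mulVec (u t)
        + G.f (σ t) + ν t ∧
      y t = (G.C (σ t)).mulVec (x t) + (G.D (σ t)).mulVec (u t)
        + G.g (σ t) + η t

/-- Two SWA models (with the same input and output dimensions) are
`T`-distinguishable if their length-`T` behaviors do not intersect. -/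
def TDistinguishable {n nu ny q m q' m' : ℕ}
    (G : SWA n nu ny q m) (Gb : SWA n nu ny q' m') (T : ℕ) : Prop :=
  ¬ ∃ (u : ℕ → Fin nu → ℝ) (y : ℕ → Fin ny → ℝ),
      InBehavior G T u y ∧ InBehavior Gb T u y

/-- feasibility of the SOS-1 MILP (P_T) implies that the two models
are not `T`-distinguishable. -/
theorem feasibility_implies_not_TDistinguishable
    {n nu ny q m q' m' T : ℕ} (hT : 0 < T)
    (G : SWA n nu ny q m) (Gb : SWA n nu ny q' m')
    (U : ℝ) (hU1 : G.U = U) (hU2 : Gb.U = U)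
    (x : ℕ → Fin n → ℝ) (xb : ℕ → Fin n → ℝ)
    (u : ℕ → Fin nu → ℝ)
    (η ηb : ℕ → Fin ny → ℝ) (ν : ℕ → Fin n → ℝ) (νb : ℕ → Fin n → ℝ)
    (a : Fin m → Fin m' → ℕ → ℝ)
    (s : Fin m → ℕ → Fin n → ℝ) (sb : Fin m' → ℕ → Fin n → ℝ)
    (r : Fin m → Fin m' → ℕ → Fin ny → ℝ) (δ : ℝ)
    (hu : ∀ t < T, ‖u t‖ ≤ U)
    (ha01 : ∀ i j, ∀ t < T, a i j t = 0 ∨ a i j t = 1)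
    (hsum : ∀ t < T, ∑ i : Fin m, ∑ j : Fin m', a i j t = 1)
    (hdyn : ∀ i, ∀ t < T,
      x (t + 1) = (G.A i).mulVec (x t) + (G.B i).mulVec (u t) + G.f i + ν t + s i t)
    (hdynb : ∀ j, ∀ t < T,
      xb (t + 1) = (Gb.A j).mulVec (xb t) + (Gb.B j).mulVec (u t) + Gb.f j + νb t + sb j t)
    (hP : ∀ t < T, ∀ k, (G.P.mulVec (x t)) k ≤ G.p k)
    (hPb : ∀ t < T, ∀ k, (Gb.P.mulVec (xb t)) k ≤ Gb.p k)
    (hout : ∀ i j, ∀ t < T,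
      (G.C i).mulVec (x t) + (G.D i).mulVec (u t) + G.g i + η t
        = (Gb.C j).mulVec (xb t) + (Gb.D j).mulVec (u t) + Gb.g j + ηb t + r i j t)
    (hη : ∀ t < T, ‖η t‖ ≤ G.εη) (hηb : ∀ t < T, ‖ηb t‖ ≤ Gb.εη)
    (hν : ∀ t < T, ‖ν t‖ ≤ G.εν) (hνb : ∀ t < T, ‖νb t‖ ≤ Gb.εν)
    (hsos_s : ∀ i j, ∀ t < T, ∀ k, a i j t = 0 ∨ s i t k = 0)
    (hsos_sb : ∀ i j, ∀ t < T, ∀ k, a i j t = 0 ∨ sb j t k = 0)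
    (hsos_r : ∀ i j, ∀ t < T, ∀ l, a i j t = 0 ∨ r i j t l = 0)
    (hδ : ∀ t < T, max ‖η t - ηb t‖ ‖ν t - νb t‖ ≤ δ) :
    ¬ TDistinguishable G Gb T := by
  classical
  intro hdist
  apply hdist
  have hpair : ∀ t, t < T → ∃ i : Fin m, ∃ j : Fin m', a i j t ≠ 0 := by
    intro t ht
    by_contra h
    push_neg at h
    have hs := hsum t ht
    rw [Finset.sum_eq_zero (fun i _ => Finset.sum_eq_zero (fun j _ => h i j))] at hs
    norm_num at hs
  obtain ⟨i0, j0, -⟩ := hpair 0 hT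
  set σ : ℕ → Fin m := fun t => if h : t < T then (hpair t h).choose else i0 with hσdef
  set σb : ℕ → Fin m' := fun t => if h : t < T then (hpair t h).choose_spec.choose else j0
    with hσbdef
  have hσ : ∀ t, ∀ ht : t < T, a (σ t) (σb t) t ≠ 0 := by
    intro t ht
    simp only [hσdef, hσbdef, dif_pos ht]
    exact (hpair t ht).choose_spec.choose_spec
  have hs0 : ∀ t, ∀ ht : t < T, s (σ t) t = 0 := by
    intro t ht
    funext k
    exact ((hsos_s (σ t) (σb t) t ht k).resolve_left (hσ t ht))
  have hsb0 : ∀ t, ∀ ht : t < T, sb (σb t) t = 0 := by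
    intro t ht
    funext k
    exact ((hsos_sb (σ t) (σb t) t ht k).resolve_left (hσ t ht))
  have hr0 : ∀ t, ∀ ht : t < T, r (σ t) (σb t) t = 0 := by
    intro t ht
    funext l
    exact ((hsos_r (σ t) (σb t) t ht l).resolve_left (hσ t ht))
  refine ⟨u, fun t => (G.C (σ t)).mulVec (x t) + (G.D (σ t)).mulVec (u t)
      + G.g (σ t) + η t, ⟨?_, x, σ, η, ν, ?_⟩, ⟨?_, xb, σb, ηb, νb, ?_⟩⟩
  · intro t ht; rw [hU1]; exact hu t ht
  · intro t ht
    refine ⟨hP t ht, hη t ht, hν t ht, ?_, rfl⟩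
    have := hdyn (σ t) t ht
    rw [hs0 t ht, add_zero] at this
    exact this
  · intro t ht; rw [hU2]; exact hu t ht
  · intro t ht
    refine ⟨hPb t ht, hηb t ht, hνb t ht, ?_, ?_⟩
    · have := hdynb (σb t) t ht
      rw [hsb0 t ht, add_zero] at this
      exact this
    · have := hout (σ t) (σb t) t ht
      rw [hr0 t ht, add_zero] at this
      exact this
end

section
/- Let G (with m modes, state constraint P x ≤ p, noise bounds ε_η, ε_ν) and Ḡ (with m̄ modes, state constraint P̄ x̄ ≤ p̄, noise bounds ε_η̄, ε_ν̄) be two discrete-time switched affine models with the same input dimension n_u and output dimension n_y, and let T be a positive integer. Suppose G and Ḡ are not T-distinguishable, i.e., there is an input–output sequence {(u_t, y_t)}_{t=0}^{T-1} belonging to both B^T(G) and B^T(Ḡ). Then there exist sequences x_0,…,x_T ∈ ℝ^n, x̄_0,…,x̄_T ∈ ℝ^{n̄}, inputs u_t ∈ ℝ^{n_u} with ‖u_t‖_∞ ≤ U, noises η_t, η̄_t ∈ ℝ^{n_y} and ν_t ∈ ℝ^n, ν̄_t ∈ ℝ^{n̄}, binary variables a_{i,j,t} ∈ {0,1} with Σ_{i=1}^m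 Σ_{j=1}^{m̄} a_{i,j,t} = 1 for every t, slack vectors s_{i,t} ∈ ℝ^n, s̄_{j,t} ∈ ℝ^{n̄}, r_{i,j,t} ∈ ℝ^{n_y}, and a real δ ≥ 0, satisfying for all t ∈ {0,…,T−1}, all i ∈ {1,…,m}, and all j ∈ {1,…,m̄}: x_{t+1} = A_i x_t + B_i u_t + f_i + ν_t + s_{i,t}; x̄_{t+1} = Ā_j x̄_t + B̄_j u_t + f̄_j + ν̄_t + s̄_{j,t}; P x_t ≤ p; P̄ x̄_t ≤ p̄; C_i x_t + D_i u_t + g_i + η_t = C̄_j x̄_t + D̄_j u_t + ḡ_j + η̄_t + r_{i,j,t}; ‖η_t‖_∞ ≤ ε_η, ‖η̄_t‖_∞ ≤ ε_η̄, ‖ν_t‖_∞ ≤ ε_ν, ‖ν̄_t‖_∞ ≤ ε_ν̄; the SOS-1 conditions (for every component, at most one of a_{i,j,t} and s_{i,t}^k is nonzero, at most one of a_{i,j,t} and s̄_{j,t}^k is nonzero, and at most one of a_{i,j,t} and r_{i,j,t}^l is nonzero); and max(‖η_t − η̄_t‖_∞, ‖ν_t − ν̄_t‖_∞) ≤ δ.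 -/
open Matrix

/-- if the two models are not `T`-distinguishable, then the SOS-1
MILP (P_T) is feasible. -/
theorem not_TDistinguishable_implies_feasibility
    {n nu ny q m q' m' T : ℕ} (hT : 0 < T)
    (G : SWA n nu ny q m) (Gb : SWA n nu ny q' m')
    (U : ℝ) (hU1 : G.U = U) (hU2 : Gb.U = U)
    (hnd : ¬ TDistinguishable G Gb T) :
    ∃ (x : ℕ → Fin n → ℝ) (xb : ℕ → Fin n → ℝ)
      (u : ℕ → Fin nu → ℝ)
      (η ηb : ℕ → Fin ny → ℝ) (ν : ℕ → Fin n → ℝ) (νb : ℕ → Fin n → ℝ)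
      (a : Fin m → Fin m' → ℕ → ℝ)
      (s : Fin m → ℕ → Fin n → ℝ) (sb : Fin m' → ℕ → Fin n → ℝ)
      (r : Fin m → Fin m' → ℕ → Fin ny → ℝ) (δ : ℝ),
      0 ≤ δ ∧
      (∀ t < T, ‖u t‖ ≤ U) ∧
      (∀ i j, ∀ t < T, a i j t = 0 ∨ a i j t = 1) ∧
      (∀ t < T, ∑ i : Fin m, ∑ j : Fin m', a i j t = 1) ∧
      (∀ i, ∀ t < T,
        x (t + 1) = (G.A i).mulVec (x t) + (G.B i).mulVec (u t) + G.f i + ν t + s i t) ∧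
      (∀ j, ∀ t < T,
        xb (t + 1) = (Gb.A j).mulVec (xb t) + (Gb.B j).mulVec (u t) + Gb.f j + νb t + sb j t) ∧
      (∀ t < T, ∀ k, (G.P.mulVec (x t)) k ≤ G.p k) ∧
      (∀ t < T, ∀ k, (Gb.P.mulVec (xb t)) k ≤ Gb.p k) ∧
      (∀ i j, ∀ t < T,
        (G.C i).mulVec (x t) + (G.D i).mulVec (u t) + G.g i + η t
          = (Gb.C j).mulVec (xb t) + (Gb.D j).mulVec (u t) + Gb.g j + ηb t + r i j t) ∧
      (∀ t < T, ‖η t‖ ≤ G.εη) ∧ (∀ t < T, ‖ηb t‖ ≤ Gb.εη) ∧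
      (∀ t < T, ‖ν t‖ ≤ G.εν) ∧ (∀ t < T, ‖νb t‖ ≤ Gb.εν) ∧
      (∀ i j, ∀ t < T, ∀ k, a i j t = 0 ∨ s i t k = 0) ∧
      (∀ i j, ∀ t < T, ∀ k, a i j t = 0 ∨ sb j t k = 0) ∧
      (∀ i j, ∀ t < T, ∀ l, a i j t = 0 ∨ r i j t l = 0) ∧
      (∀ t < T, max ‖η t - ηb t‖ ‖ν t - νb t‖ ≤ δ) := by
  rw [TDistinguishable, not_not] at hnd
  obtain ⟨u, y, ⟨hu, x, σ, η, ν, h⟩, ⟨hub, xb, σb, ηb, νb, hb⟩⟩ := hnd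
  have hTne : (Finset.range T).Nonempty := Finset.nonempty_range_iff.mpr hT.ne'
  refine ⟨x, xb, u, η, ηb, ν, νb,
    (fun i j t => if σ t = i ∧ σb t = j then 1 else 0),
    (fun i t => x (t + 1) - ((G.A i).mulVec (x t) + (G.B i).mulVec (u t) + G.f i + ν t)),
    (fun j t => xb (t + 1) - ((Gb.A j).mulVec (xb t) + (Gb.B j).mulVec (u t) + Gb.f j + νb t)),
    (fun i j t => ((G.C i).mulVec (x t) + (G.D i).mulVec (u t) + G.g i + η t)
      - ((Gb.C j).mulVec (xb t) + (Gb.D j).mulVec (u t) + Gb.g j + ηb t)),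
    (Finset.range T).sup' hTne (fun t => max ‖η t - ηb t‖ ‖ν t - νb t‖), ?_, ?_, ?_, ?_, ?_, ?_,
    ?_, ?_, ?_, ?_, ?_, ?_, ?_, ?_, ?_, ?_, ?_⟩
  · exact le_trans (le_max_of_le_left (norm_nonneg (η 0 - ηb 0)))
      (Finset.le_sup' (fun t => max ‖η t - ηb t‖ ‖ν t - νb t‖) (Finset.mem_range.mpr hT))
  · intro t ht; exact hU1 ▸ hu t ht
  · intro i j t _; by_cases hij : σ t = i ∧ σb t = j <;> simp [hij]
  · intro t _
    rw [Finset.sum_comm]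
    rw [Fintype.sum_eq_single (σb t) (fun j hj => ?_)]
    · rw [Fintype.sum_eq_single (σ t) (fun i hi => ?_)]
      · simp
      · simp [hi.symm]
    · exact Finset.sum_eq_zero fun i _ => if_neg fun hc => hj hc.2.symm
  · intro i t _; ext k; simp
  · intro j t _; ext k; simp
  · intro t ht; exact (h t ht).1
  · intro t ht; exact (hb t ht).1
  · intro i j t _; ext l; simp
  · intro t ht; exact (h t ht).2.1
  · intro t ht; exact (hb t ht).2.1
  · intro t ht; exact (h t ht).2.2.1
  · intro t ht; exact (hb t ht).2.2.1
  · intro i j t ht k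
    by_cases hi : σ t = i
    · right; subst hi; simp [(h t ht).2.2.2.1]
    · left; simp [hi]
  · intro i j t ht k
    by_cases hj : σb t = j
    · right; subst hj; simp [(hb t ht).2.2.2.1]
    · left; simp [hj]
  · intro i j t ht l
    by_cases hij : σ t = i ∧ σb t = j
    · right
      obtain ⟨hi, hj⟩ := hij; subst hi; subst hj
      simp only [← (h t ht).2.2.2.2, ← (hb t ht).2.2.2.2, sub_self, Pi.zero_apply]
    · left; simp [hij]
  · intro t ht
    exact Finset.le_sup' (fun t => max ‖η t - ηb t‖ ‖ν t - νb t‖) (Finset.mem_range.mpr ht)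
end
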